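/- Let a ≥ 2 and n ≥ 1 be natural numbers, let m ≥ 1, and let c_1 < c_2 < ... < c_m be positive integers with c_1 + c_2 + ⋯ + c_m ≤ (m + 1)·c_1, such that the numbers p_i = a^{c_i} n + 1 are (distinct) primes for i = 1, ..., m. Then for N = p_1 p_2 ⋯ p_m, the number φ(N) divides (N − 1)^{m+1}. -/

import Mathlib

lemma totient_prod_aux {ι : Type*} (s : Finset ι) (f : ι → ℕ)
    (h : (s : Set ι).Pairwise (Function.onFun Nat.Coprime f)) :
    Nat.totient (∏ i ∈ s, f i) = ∏ i ∈ s, Nat.totient (f i) := by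
  induction s using Finset.cons_induction with
  | empty => simpa using Nat.ModEq.refl 1
  | cons i s hi ih =>
    rw [Finset.prod_cons, Finset.prod_cons,
      Nat.totient_mul (Nat.Coprime.prod_right fun j hj =>
        h (Finset.mem_cons_self i s) (Finset.mem_cons_of_mem hj)
          (fun hij => hi (hij ▸ hj))),
      ih (h.mono (by simp [Finset.coe_cons, Set.subset_insert]))]

/-- If `p i = a ^ (c i) * n + 1` are primes with `c` strictly increasing and positive
(`a ≥ 2`, `n ≥ 1`, `m ≥ 1`) and `∑ c i ≤ (m + 1) * c 0`, then for `N = ∏ p i`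
we have `φ N ∣ (N - 1) ^ (m + 1)`. -/
theorem totient_dvd_pow_succ_of_tuple (a n m : ℕ) (ha : 2 ≤ a) (hn : 1 ≤ n) (hm : 1 ≤ m)
    (c : Fin m → ℕ) (hc : ∀ i, 1 ≤ c i) (hmono : StrictMono c)
    (hsum : ∑ i, c i ≤ (m + 1) * c ⟨0, hm⟩)
    (hprime : ∀ i, Nat.Prime (a ^ c i * n + 1)) :
    Nat.totient (∏ i, (a ^ c i * n + 1)) ∣ ((∏ i, (a ^ c i * n + 1)) - 1) ^ (m + 1) := by
  set i0 : Fin m := ⟨0, hm⟩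
  set d : ℕ := a ^ c i0 * n with hd
  have hinj : Function.Injective fun i => a ^ c i * n + 1 := by
    intro i j hij
    simp only [add_left_inj] at hij
    have := Nat.eq_of_mul_eq_mul_right (by omega : 0 < n) hij
    exact hmono.injective (Nat.pow_right_injective ha this)
  -- totient of the product
  have htot : Nat.totient (∏ i, (a ^ c i * n + 1)) = a ^ (∑ i, c i) * n ^ m := by
    rw [totient_prod_aux _ _ (fun i _ j _ hij =>
      (Nat.coprime_primes (hprime i) (hprime j)).mpr (fun h => hij (hinj h)))]
    have : ∀ i : Fin m, Nat.totient (a ^ c i * n + 1) = a ^ c i * n := by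
      intro i
      rw [Nat.totient_prime (hprime i)]
      omega
    simp only [this]
    rw [Finset.prod_mul_distrib, Finset.prod_pow_eq_pow_sum, Finset.prod_const,
      Finset.card_univ, Fintype.card_fin]
  -- d divides N - 1
  have hdvd_each : ∀ i : Fin m, d ∣ a ^ c i * n := by
    intro i
    exact Nat.mul_dvd_mul_right (pow_dvd_pow a (hmono.monotone (by exact Fin.le_def.mpr (Nat.zero_le _) : i0 ≤ i))) n
  have hmodeq : ∀ s : Finset (Fin m), (∏ i ∈ s, (a ^ c i * n + 1)) ≡ 1 [MOD d] := by
    intro s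
    induction s using Finset.cons_induction with
    | empty => simpa using Nat.ModEq.refl 1
    | cons i s hi ih =>
      rw [Finset.prod_cons]
      have h1 : (a ^ c i * n + 1) ≡ 1 [MOD d] :=
        ((Nat.modEq_iff_dvd' (by omega)).mpr (by simpa using hdvd_each i)).symm
      simpa using h1.mul ih
  have hprod_pos : 1 ≤ ∏ i, (a ^ c i * n + 1) :=
    Finset.one_le_prod' fun i _ => by omega
  have hdN : d ∣ (∏ i, (a ^ c i * n + 1)) - 1 :=
    (Nat.modEq_iff_dvd' hprod_pos).mp (hmodeq Finset.univ).symm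
  rw [htot]
  calc a ^ (∑ i, c i) * n ^ m ∣ a ^ ((m + 1) * c i0) * n ^ (m + 1) :=
        mul_dvd_mul (pow_dvd_pow a hsum) (pow_dvd_pow n (Nat.le_succ m))
    _ = d ^ (m + 1) := by rw [hd, mul_pow, ← pow_mul, mul_comm (c i0)]
    _ ∣ ((∏ i, (a ^ c i * n + 1)) - 1) ^ (m + 1) := pow_dvd_pow_of_dvd hdN _
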